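/- Let a₁, ..., aₙ be positive reals, let U' > 0 and V ≤ 0 be reals, and let θ₁, ..., θₙ ∈ [0,1] with Σᵢ θᵢ = 1. If a₁U' + V > 0 and a₁ ≤ a₂ ≤ ... ≤ aₙ, then Σᵢ arctan(aᵢU' + θᵢV) ≥ arctan(a₁U' + V) + Σ_{i≥2} arctan(aᵢU'). -/

import Mathlib

open Real

lemma arctan_concave_Ici : ConcaveOn ℝ (Set.Ici (0:ℝ)) Real.arctan := by
  have hderiv2 : ∀ x : ℝ, HasDerivAt (fun y : ℝ => 1 / (1 + y ^ 2))
      (-(2 * x) / (1 + x ^ 2) ^ 2) x := by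
    intro x
    have h1 : HasDerivAt (fun y : ℝ => 1 + y ^ 2) (2 * x) x := by
      simpa using ((hasDerivAt_pow 2 x).const_add 1)
    have hne : (1 + x ^ 2) ≠ 0 := by positivity
    simpa [one_div, Pi.inv_def] using h1.inv hne
  apply concaveOn_of_deriv2_nonpos (convex_Ici 0)
    Real.continuous_arctan.continuousOn
    (Real.differentiable_arctan.differentiableOn)
  · rw [Real.deriv_arctan]
    exact fun x hx => ((hderiv2 x).differentiableAt).differentiableWithinAt
  · intro x hx
    rw [interior_Ici] at hx
    have : deriv^[2] Real.arctan x = -(2 * x) / (1 + x ^ 2) ^ 2 := by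
      show deriv (deriv Real.arctan) x = _
      rw [Real.deriv_arctan]
      exact (hderiv2 x).deriv
    rw [this]
    have hx0 : (0:ℝ) < x := hx
    have : (0:ℝ) ≤ 2 * x := by linarith
    apply div_nonpos_of_nonpos_of_nonneg (by linarith) (by positivity)

lemma key_ineq (x y w t : ℝ) (hy : 0 < y + w) (hxy : y ≤ x) (hw : w ≤ 0)
    (ht0 : 0 ≤ t) (ht1 : t ≤ 1) :
    Real.arctan x - Real.arctan (x + t * w) ≤
      t * (Real.arctan y - Real.arctan (y + w)) := by
  set c : ℝ := t * w with hc
  have hcw : w ≤ c := by nlinarith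
  have hc0 : c ≤ 0 := mul_nonpos_of_nonneg_of_nonpos ht0 hw
  have hy0 : 0 < y := by linarith
  -- Step A : h s = arctan (s + c) - arctan s is monotone on Ici (-c/2)
  have stepA : Real.arctan x - Real.arctan (x + c) ≤
      Real.arctan y - Real.arctan (y + c) := by
    have hmono : MonotoneOn (fun s : ℝ => Real.arctan (s + c) - Real.arctan s)
        (Set.Ici (-c / 2)) := by
      apply monotoneOn_of_deriv_nonneg (convex_Ici _)
      · exact ((Real.continuous_arctan.comp (continuous_id.add continuous_const)).sub
          Real.continuous_arctan).continuousOn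
      · apply DifferentiableOn.sub
        · exact (Real.differentiable_arctan.comp
            (differentiable_id.add_const c)).differentiableOn
        · exact Real.differentiable_arctan.differentiableOn
      · intro s hs
        rw [interior_Ici] at hs
        have hd : HasDerivAt (fun s : ℝ => Real.arctan (s + c) - Real.arctan s)
            (1 / (1 + (s + c) ^ 2) - 1 / (1 + s ^ 2)) s := by
          have h1 : HasDerivAt (fun s : ℝ => Real.arctan (s + c))
              (1 / (1 + (s + c) ^ 2)) s := by
            simpa [Function.comp_def] using (Real.hasDerivAt_arctan (s + c)).comp s
              ((hasDerivAt_id s).add_const c)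
          exact h1.sub (Real.hasDerivAt_arctan s)
        rw [hd.deriv]
        have hs' : -c / 2 < s := hs
        have hsq : (s + c) ^ 2 ≤ s ^ 2 := by nlinarith
        have h1 : (0:ℝ) < 1 + (s + c) ^ 2 := by positivity
        have h2 : (0:ℝ) < 1 + s ^ 2 := by positivity
        have := one_div_le_one_div_of_le h1 (by linarith : 1 + (s+c)^2 ≤ 1 + s^2)
        linarith
    have hyI : y ∈ Set.Ici (-c / 2) := by
      simp only [Set.mem_Ici]; linarith
    have hxI : x ∈ Set.Ici (-c / 2) := by
      simp only [Set.mem_Ici]; linarith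
    have := hmono hyI hxI hxy
    simp only at this
    linarith
  -- Step B : concavity on [y+w, y]
  have stepB : Real.arctan y - Real.arctan (y + c) ≤
      t * (Real.arctan y - Real.arctan (y + w)) := by
    have h1 : (y + w) ∈ Set.Ici (0:ℝ) := le_of_lt hy
    have h2 : y ∈ Set.Ici (0:ℝ) := le_of_lt hy0
    have := arctan_concave_Ici.2 h1 h2 ht0 (by linarith : (0:ℝ) ≤ 1 - t)
      (by ring : t + (1 - t) = 1)
    have heq : t • (y + w) + (1 - t) • y = y + c := by
      simp [hc]; ring
    rw [heq] at this
    simp only [smul_eq_mul] at this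
    linarith
  linarith

theorem stmt_2 (n : ℕ) (hn : 0 < n) (a θ : Fin n → ℝ) (U' V : ℝ)
    (ha : ∀ i, 0 < a i) (hmono : ∀ i j : Fin n, i ≤ j → a i ≤ a j)
    (hU' : 0 < U') (hV : V ≤ 0)
    (hθ : ∀ i, θ i ∈ Set.Icc (0 : ℝ) 1) (hθsum : ∑ i, θ i = 1)
    (hpos : 0 < a ⟨0, hn⟩ * U' + V) :
    Real.arctan (a ⟨0, hn⟩ * U' + V)
        + ∑ i ∈ Finset.univ.erase ⟨0, hn⟩, Real.arctan (a i * U')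
      ≤ ∑ i, Real.arctan (a i * U' + θ i * V) := by
  set z : Fin n := ⟨0, hn⟩
  have hkey : ∀ i : Fin n,
      Real.arctan (a i * U') - Real.arctan (a i * U' + θ i * V) ≤
        θ i * (Real.arctan (a z * U') - Real.arctan (a z * U' + V)) := by
    intro i
    exact key_ineq (a i * U') (a z * U') V (θ i) hpos
      (mul_le_mul_of_nonneg_right (hmono z i (Fin.mk_le_of_le_val (Nat.zero_le _)))
        hU'.le) hV (hθ i).1 (hθ i).2
  have hsum := Finset.sum_le_sum (s := (Finset.univ : Finset (Fin n))) (fun i _ => hkey i)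
  rw [Finset.sum_sub_distrib, ← Finset.sum_mul, hθsum, one_mul] at hsum
  have hsplit : ∑ i, Real.arctan (a i * U') =
      Real.arctan (a z * U') + ∑ i ∈ Finset.univ.erase z, Real.arctan (a i * U') :=
    (Finset.add_sum_erase _ _ (Finset.mem_univ z)).symm
  linarith [hsum, hsplit]
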